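/- arXiv:2506.08988 — 3 statements merged into one kernel-verified Lean document; each statement's English description precedes it below -/
import Mathlib

section
/- Let x = (x₀, x̄) and y = (y₀, ȳ) be elements of ℝ × EuclideanSpace ℝ (Fin n) belonging to the second-order cone, i.e. ‖x̄‖ ≤ x₀ and ‖ȳ‖ ≤ y₀. If ⟨x, y⟩ = x₀·y₀ + ⟪x̄, ȳ⟫ = 0, then either x = 0, or y = 0, or there exists a constant κ > 0 such that x₀ = κ·y₀ and x̄ = -κ • ȳ. -/
open RealInnerProductSpace

/-- Lemma 1 of the paper: complementarity on the second-order cone. -/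
theorem soc_complementarity (n : ℕ) (x₀ y₀ : ℝ) (xbar ybar : EuclideanSpace ℝ (Fin n))
    (hx : ‖xbar‖ ≤ x₀) (hy : ‖ybar‖ ≤ y₀)
    (h : x₀ * y₀ + ⟪xbar, ybar⟫ = 0) :
    ((x₀, xbar) : ℝ × EuclideanSpace ℝ (Fin n)) = 0 ∨
      ((y₀, ybar) : ℝ × EuclideanSpace ℝ (Fin n)) = 0 ∨
      ∃ κ : ℝ, 0 < κ ∧ x₀ = κ * y₀ ∧ xbar = -κ • ybar := by
  have hx0 : 0 ≤ x₀ := (norm_nonneg xbar).trans hx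
  have hy0 : 0 ≤ y₀ := (norm_nonneg ybar).trans hy
  rcases eq_or_lt_of_le hx0 with hx0' | hx0'
  · left
    have hxb : xbar = 0 := by
      have := hx.trans hx0'.symm.le
      simpa [norm_le_zero_iff] using this
    simp [← hx0', hxb, Prod.ext_iff]
  rcases eq_or_lt_of_le hy0 with hy0' | hy0'
  · right; left
    have hyb : ybar = 0 := by
      have := hy.trans hy0'.symm.le
      simpa [norm_le_zero_iff] using this
    simp [← hy0', hyb, Prod.ext_iff]
  right; right
  have hcs : -⟪xbar, ybar⟫ ≤ ‖xbar‖ * ‖ybar‖ := by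
    have := abs_real_inner_le_norm xbar ybar
    have := neg_abs_le (⟪xbar, ybar⟫)
    linarith [abs_real_inner_le_norm xbar ybar, neg_abs_le (⟪xbar, ybar⟫)]
  have hprod : x₀ * y₀ ≤ ‖xbar‖ * ‖ybar‖ := by linarith
  have hprod' : ‖xbar‖ * ‖ybar‖ ≤ x₀ * y₀ :=
    mul_le_mul hx hy (norm_nonneg _) hx0
  have heq : ‖xbar‖ * ‖ybar‖ = x₀ * y₀ := le_antisymm hprod' hprod
  have hnx : ‖xbar‖ = x₀ := by
    by_contra hne
    have : ‖xbar‖ < x₀ := lt_of_le_of_ne hx hne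
    have hyb0 : 0 < ‖ybar‖ := by
      by_contra hyb0
      push_neg at hyb0
      have : ‖ybar‖ = 0 := le_antisymm hyb0 (norm_nonneg _)
      rw [this] at heq
      nlinarith
    nlinarith
  have hny : ‖ybar‖ = y₀ := by
    have hxb0 : 0 < ‖xbar‖ := by rw [hnx]; exact hx0'
    nlinarith
  have hinner : ⟪xbar, -ybar⟫ = ‖xbar‖ * ‖-ybar‖ := by
    rw [inner_neg_right, norm_neg, hnx, hny]; linarith
  have hkey := inner_eq_norm_mul_iff_real.mp hinner
  rw [norm_neg, hnx, hny] at hkey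
  refine ⟨x₀ / y₀, div_pos hx0' hy0', by field_simp, ?_⟩
  have := congrArg (fun v => (y₀⁻¹ : ℝ) • v) hkey
  simp only [smul_smul] at this
  rw [inv_mul_cancel₀ (ne_of_gt hy0'), one_smul] at this
  rw [this]
  simp [smul_smul, neg_div, div_eq_mul_inv, mul_comm]
end

section
/- Let x = (x₀, x̄) and y = (y₀, ȳ) be elements of ℝ × EuclideanSpace ℝ (Fin n) belonging to the second-order cone, i.e. ‖x̄‖ ≤ x₀ and ‖ȳ‖ ≤ y₀. If x₀·y₀ + ⟪x̄, ȳ⟫ = 0 and x ≠ 0 and y ≠ 0, then both x and y lie on the boundary of the cone and have positive first component: x₀ = ‖x̄‖ > 0 and y₀ = ‖ȳ‖ > 0; moreover ⟪x̄, ȳ⟫ = -‖x̄‖·‖ȳ‖. -/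
open RealInnerProductSpace

/-- If two nonzero points of the second-order cone have vanishing inner product,
both lie on the boundary of the cone with positive first component, and their
vector parts are anti-aligned. -/
theorem soc_boundary_of_complementarity (n : ℕ) (x₀ y₀ : ℝ)
    (xbar ybar : EuclideanSpace ℝ (Fin n))
    (hx : ‖xbar‖ ≤ x₀) (hy : ‖ybar‖ ≤ y₀)
    (h : x₀ * y₀ + ⟪xbar, ybar⟫ = 0)
    (hx0 : ((x₀, xbar) : ℝ × EuclideanSpace ℝ (Fin n)) ≠ 0)
    (hy0 : ((y₀, ybar) : ℝ × EuclideanSpace ℝ (Fin n)) ≠ 0) :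
    (x₀ = ‖xbar‖ ∧ 0 < x₀) ∧ (y₀ = ‖ybar‖ ∧ 0 < y₀) ∧ ⟪xbar, ybar⟫ = -(‖xbar‖ * ‖ybar‖) := by
  have hxn : (0:ℝ) ≤ ‖xbar‖ := norm_nonneg _
  have hyn : (0:ℝ) ≤ ‖ybar‖ := norm_nonneg _
  have hx0' : 0 < x₀ := by
    rcases lt_or_eq_of_le (hxn.trans hx) with h' | h'
    · exact h'
    · exfalso
      have hxb : xbar = 0 := by
        have : ‖xbar‖ = 0 := le_antisymm (h' ▸ hx) hxn
        simpa using this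
      exact hx0 (by simp [Prod.ext_iff, hxb, h'.symm])
  have hy0' : 0 < y₀ := by
    rcases lt_or_eq_of_le (hyn.trans hy) with h' | h'
    · exact h'
    · exfalso
      have hyb : ybar = 0 := by
        have : ‖ybar‖ = 0 := le_antisymm (h' ▸ hy) hyn
        simpa using this
      exact hy0 (by simp [Prod.ext_iff, hyb, h'.symm])
  have hcs : -(‖xbar‖ * ‖ybar‖) ≤ ⟪xbar, ybar⟫ := neg_le_of_abs_le (abs_real_inner_le_norm _ _)
  have hinner : ⟪xbar, ybar⟫ = -(x₀ * y₀) := by linarith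
  have hprod : x₀ * y₀ ≤ ‖xbar‖ * ‖ybar‖ := by
    have := hcs
    rw [hinner] at this; linarith
  have hprod' : ‖xbar‖ * ‖ybar‖ ≤ x₀ * y₀ := mul_le_mul hx hy hyn hx0'.le
  have heq : ‖xbar‖ * ‖ybar‖ = x₀ * y₀ := le_antisymm hprod' hprod
  have hxb_pos : 0 < ‖xbar‖ := by
    by_contra hc
    have : ‖xbar‖ = 0 := le_antisymm (not_lt.mp hc) hxn
    rw [this] at heq
    nlinarith
  have hyb_pos : 0 < ‖ybar‖ := by
    by_contra hc
    have : ‖ybar‖ = 0 := le_antisymm (not_lt.mp hc) hyn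
    rw [this] at heq
    nlinarith
  have hxe : x₀ = ‖xbar‖ := by nlinarith
  have hye : y₀ = ‖ybar‖ := by nlinarith
  exact ⟨⟨hxe, hx0'⟩, ⟨hye, hy0'⟩, by rw [hinner, hxe, hye]⟩
end

section
/- Let N ≥ 1 and m ≥ 1. Let C₊ = (I_N 0) and C₋ = (0 I_N) be the N × (N+1) real matrices as above, and let F̃ be the real matrix obtained by stacking vertically the two blocks 𝟙₃ ⊗ C₊ ⊗ I_m and 𝟙₃ ⊗ C₋ ⊗ I_m, where 𝟙₃ denotes the 3 × 1 all-ones matrix and ⊗ denotes the Kronecker product. Then F̃ᵀ F̃ = 3 · (D ⊗ I_m), where D is the diagonal (N+1) × (N+1) matrix with diagonal entries (1, 2, …, 2, 1); in particular, F̃ᵀ F̃ is a diagonal matrix. -/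
open Matrix Kronecker

/-- For the copying matrix `F̃` obtained by stacking `𝟙₃ ⊗ C₊ ⊗ I_m` over
`𝟙₃ ⊗ C₋ ⊗ I_m`, the product `F̃ᵀ F̃` equals `3 (D ⊗ I_m)` with
`D = diag(1, 2, …, 2, 1)`; in particular it is diagonal. -/
theorem copy_operator_gram (N m : ℕ) (hN : 1 ≤ N) (hm : 1 ≤ m)
    (Cp Cm : Matrix (Fin N) (Fin (N + 1)) ℝ)
    (hCp : ∀ (k : Fin N) (j : Fin (N + 1)), Cp k j = if (j : ℕ) = (k : ℕ) then 1 else 0)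
    (hCm : ∀ (k : Fin N) (j : Fin (N + 1)), Cm k j = if (j : ℕ) = (k : ℕ) + 1 then 1 else 0)
    (ones3 : Matrix (Fin 3) (Fin 1) ℝ) (hones : ∀ i j, ones3 i j = 1)
    (Ft : Matrix ((Fin 3 × Fin N) × Fin m ⊕ (Fin 3 × Fin N) × Fin m)
      ((Fin 1 × Fin (N + 1)) × Fin m) ℝ)
    (hFt : Ft = Matrix.fromRows
      ((ones3 ⊗ₖ Cp) ⊗ₖ (1 : Matrix (Fin m) (Fin m) ℝ))
      ((ones3 ⊗ₖ Cm) ⊗ₖ (1 : Matrix (Fin m) (Fin m) ℝ))) :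
    Ftᵀ * Ft = (3 : ℝ) •
        (((1 : Matrix (Fin 1) (Fin 1) ℝ) ⊗ₖ
            Matrix.diagonal (fun j : Fin (N + 1) =>
              if (j : ℕ) = 0 ∨ (j : ℕ) = N then (1 : ℝ) else 2)) ⊗ₖ
          (1 : Matrix (Fin m) (Fin m) ℝ)) ∧
      (Ftᵀ * Ft).IsDiag := by
  have hones3 : ones3ᵀ * ones3 = (3 : ℝ) • (1 : Matrix (Fin 1) (Fin 1) ℝ) := by
    ext i j
    have : i = j := Subsingleton.elim i j
    subst this
    simp [Matrix.mul_apply, hones, Fin.sum_univ_three, Matrix.one_apply]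
  have hCpG : Cpᵀ * Cp =
      Matrix.diagonal (fun j : Fin (N + 1) => if (j : ℕ) < N then (1 : ℝ) else 0) := by
    ext a b
    simp only [Matrix.mul_apply, Matrix.transpose_apply, hCp, Matrix.diagonal_apply,
      ite_mul, one_mul, zero_mul]
    rcases lt_or_ge (a : ℕ) N with h | h
    · rw [Finset.sum_eq_single (⟨(a : ℕ), h⟩ : Fin N)]
      · by_cases hab : a = b
        · subst hab; simp [h]
        · have : (b : ℕ) ≠ (a : ℕ) := fun hh => hab (Fin.ext (hh.symm ▸ rfl)).symm
          simp [hab, this]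
          try omega
      · intro k _ hk
        have : (a : ℕ) ≠ (k : ℕ) := fun hh => hk (Fin.ext hh.symm)
        simp [this]
      · simp
    · have h1 : ∀ k : Fin N, (a : ℕ) ≠ (k : ℕ) := fun k hh => by
        have := k.isLt; omega
      have h2 : ¬ ((a : ℕ) < N) := not_lt.mpr h
      simp only [h1, if_false, Finset.sum_const_zero, Matrix.diagonal_apply]
      by_cases hab : a = b
      · subst hab; simp [h2]
      · simp [hab]
  have hCmG : Cmᵀ * Cm =
      Matrix.diagonal (fun j : Fin (N + 1) => if 1 ≤ (j : ℕ) then (1 : ℝ) else 0) := by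
    ext a b
    simp only [Matrix.mul_apply, Matrix.transpose_apply, hCm, Matrix.diagonal_apply,
      ite_mul, one_mul, zero_mul]
    rcases Nat.lt_or_ge 0 (a : ℕ) with h | h
    · have ha : (a : ℕ) - 1 < N := by have := a.isLt; omega
      rw [Finset.sum_eq_single (⟨(a : ℕ) - 1, ha⟩ : Fin N)]
      · by_cases hab : a = b
        · subst hab
          simp only [Fin.val_mk, if_pos (by omega : (a : ℕ) = (a : ℕ) - 1 + 1),
            Matrix.diagonal_apply_eq]
          rw [if_pos (show 1 ≤ (a : ℕ) from h)]
          try simp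
        · have : (b : ℕ) ≠ (a : ℕ) - 1 + 1 := by
            intro hh
            exact hab (Fin.ext (by omega)).symm
          simp [hab, this]
          try omega
      · intro k _ hk
        have : (a : ℕ) ≠ (k : ℕ) + 1 := by
          intro hh
          exact hk (Fin.ext (by simp only [Fin.val_mk]; omega))
        simp [this]
      · simp
    · have h0 : (a : ℕ) = 0 := by omega
      have h1 : ∀ k : Fin N, (a : ℕ) ≠ (k : ℕ) + 1 := fun k hh => by omega
      simp only [h1, if_false, Finset.sum_const_zero, Matrix.diagonal_apply]
      by_cases hab : a = b
      · subst hab; simp [h0]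
      · simp [hab]
  have key : Ftᵀ * Ft = (3 : ℝ) •
      (((1 : Matrix (Fin 1) (Fin 1) ℝ) ⊗ₖ
          Matrix.diagonal (fun j : Fin (N + 1) =>
            if (j : ℕ) = 0 ∨ (j : ℕ) = N then (1 : ℝ) else 2)) ⊗ₖ
        (1 : Matrix (Fin m) (Fin m) ℝ)) := by
    subst hFt
    rw [Matrix.transpose_fromRows, Matrix.fromCols_mul_fromRows]
    rw [← Matrix.kroneckerMap_transpose, ← Matrix.kroneckerMap_transpose,
        ← Matrix.kroneckerMap_transpose, ← Matrix.kroneckerMap_transpose,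
        ← Matrix.mul_kronecker_mul, ← Matrix.mul_kronecker_mul,
        ← Matrix.mul_kronecker_mul, ← Matrix.mul_kronecker_mul,
        Matrix.transpose_one, Matrix.one_mul, hones3, hCpG, hCmG]
    rw [← Matrix.add_kronecker, ← Matrix.kronecker_add]
    have hD : (Matrix.diagonal (fun j : Fin (N + 1) => if (j : ℕ) < N then (1 : ℝ) else 0))
        + (Matrix.diagonal (fun j : Fin (N + 1) => if 1 ≤ (j : ℕ) then (1 : ℝ) else 0))
        = Matrix.diagonal (fun j : Fin (N + 1) =>
            if (j : ℕ) = 0 ∨ (j : ℕ) = N then (1 : ℝ) else 2) := by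
      rw [Matrix.diagonal_add]
      refine congrArg Matrix.diagonal (funext fun j => ?_)
      have hj := j.isLt
      try simp only [Pi.add_apply]
      by_cases h0 : (j : ℕ) = 0
      · rw [if_pos (show (j : ℕ) < N by omega), if_neg (show ¬ 1 ≤ (j : ℕ) by omega),
            if_pos (Or.inl h0)]
        norm_num
      · by_cases hjN : (j : ℕ) = N
        · rw [if_neg (show ¬ (j : ℕ) < N by omega), if_pos (show 1 ≤ (j : ℕ) by omega),
              if_pos (Or.inr hjN)]
          norm_num
        · rw [if_pos (show (j : ℕ) < N by omega), if_pos (show 1 ≤ (j : ℕ) by omega),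
              if_neg (show ¬ ((j : ℕ) = 0 ∨ (j : ℕ) = N) by omega)]
          norm_num
    rw [hD, Matrix.smul_kronecker, Matrix.smul_kronecker]
  refine ⟨key, ?_⟩
  rw [key]
  apply Matrix.IsDiag.smul
  have h1 : (1 : Matrix (Fin 1) (Fin 1) ℝ) = Matrix.diagonal (fun _ => (1:ℝ)) := by
    simp [Matrix.diagonal_one]
  have h2 : (1 : Matrix (Fin m) (Fin m) ℝ) = Matrix.diagonal (fun _ => (1:ℝ)) := by
    simp [Matrix.diagonal_one]
  rw [h1, h2, Matrix.diagonal_kronecker_diagonal, Matrix.diagonal_kronecker_diagonal]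
  exact Matrix.isDiag_diagonal _
end
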